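/- The map φ : S_n → S_n is a bijection. -/

import Mathlib

namespace PaperStats

/-- `des w` is the number of descents of the word `w` (0-indexed positions `i`
with `w(i) > w(i+1)`). -/
def des (w : List ℕ) : ℕ :=
  ((Finset.range (w.length - 1)).filter fun i => w.getD (i + 1) 0 < w.getD i 0).card

/-- `inv w` is the number of inversions of the word `w`: pairs of positions
`i < j` with `w(i) > w(j)`. -/
def inv (w : List ℕ) : ℕ :=
  ((Finset.range w.length ×ˢ Finset.range w.length).filter
    fun p => p.1 < p.2 ∧ w.getD p.2 0 < w.getD p.1 0).card

/-- An inversion `(i,j)` of `w` is admissible if either `w(j) < w(j+1)`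
(`j` is not the last position and is followed by an ascent), or there is a
position `k` strictly between `i` and `j` with `w(j) > w(k)`. -/
def IsAdmissible (w : List ℕ) (i j : ℕ) : Prop :=
  (j + 1 < w.length ∧ w.getD j 0 < w.getD (j + 1) 0) ∨
    ∃ k, i < k ∧ k < j ∧ w.getD k 0 < w.getD j 0

instance (w : List ℕ) (i j : ℕ) : Decidable (IsAdmissible w i j) :=
  decidable_of_iff ((j + 1 < w.length ∧ w.getD j 0 < w.getD (j + 1) 0) ∨
      ∃ k ∈ Finset.Ioo i j, w.getD k 0 < w.getD j 0) (by
    unfold IsAdmissible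
    simp only [Finset.mem_Ioo, and_assoc])

/-- `ai w` is the number of admissible inversions of `w`. -/
def ai (w : List ℕ) : ℕ :=
  ((Finset.range w.length ×ˢ Finset.range w.length).filter
    fun p => p.1 < p.2 ∧ w.getD p.2 0 < w.getD p.1 0 ∧ IsAdmissible w p.1 p.2).card

/-- `aid w = ai w + des w`. -/
def aid (w : List ℕ) : ℕ := ai w + des w

/-- The statistic `aix`, defined recursively: `aix ∅ = 0`; writing a nonempty
word as `π = α m β`, where `m` is the smallest letter and `α` is the maximal
prefix not containing `m`, one has `aix π = 1 + aix β` if `α = ∅`,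
`aix π = 0` if `β = ∅` (and `α ≠ ∅`), and `aix π = aix α` otherwise. -/
def aix : List ℕ → ℕ
  | [] => 0
  | x :: xs =>
    if (x :: xs).takeWhile (fun a => decide (a ≠ xs.foldr min x)) = [] then
      1 + aix (((x :: xs).dropWhile (fun a => decide (a ≠ xs.foldr min x))).tail)
    else if ((x :: xs).dropWhile (fun a => decide (a ≠ xs.foldr min x))).tail = [] then 0
    else aix ((x :: xs).takeWhile (fun a => decide (a ≠ xs.foldr min x)))
termination_by w => w.length
decreasing_by
  · simp only [List.foldr_attach] at *
    have h1 := (List.dropWhile_sublist (l := x :: xs) (fun a => decide (a ≠ xs.foldr min x))).length_le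
    have h2 := List.length_tail (l := (x :: xs).dropWhile (fun a => decide (a ≠ xs.foldr min x)))
    simp only [List.length_cons] at *
    omega
  · rename_i hα hβ
    simp only [List.foldr_attach] at *
    try simp only [List.foldr_attach] at *
    have h0 : ((x :: xs).takeWhile (fun a => decide (a ≠ xs.foldr min x))) ++
        ((x :: xs).dropWhile (fun a => decide (a ≠ xs.foldr min x))) = x :: xs :=
      List.takeWhile_append_dropWhile ..
    have h1 : ((x :: xs).dropWhile (fun a => decide (a ≠ xs.foldr min x))) ≠ [] := by
      intro h
      apply hβ
      rw [h]
      rfl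
    have h2 := congrArg List.length h0
    simp only [List.length_append, List.length_cons] at h2
    have h3 : 0 < ((x :: xs).dropWhile (fun a => decide (a ≠ xs.foldr min x))).length :=
      List.length_pos_iff.mpr h1
    simp only [List.length_cons]
    omega

/-- The map `f(k,τ)`: with `m` the smallest letter of `τ` together with `k`
(`k` not occurring in `τ`), and `τ = α m β` with `α` the maximal prefix of `τ`
avoiding `m`: `f(k,∅) = k`; `f(k,τ) = kτ` if `k = m`; and for `k > m`,
`f(k,τ) = f(k,β) m` if `α = ∅`, `f(k,τ) = k m α` if `β = ∅`, and
`f(k,τ) = f(k,α) m β` otherwise. -/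
def fkt (k : ℕ) : List ℕ → List ℕ
  | [] => [k]
  | x :: xs =>
    if k < xs.foldr min x then k :: x :: xs
    else if (x :: xs).takeWhile (fun a => decide (a ≠ xs.foldr min x)) = [] then
      fkt k (((x :: xs).dropWhile (fun a => decide (a ≠ xs.foldr min x))).tail) ++
        [xs.foldr min x]
    else if ((x :: xs).dropWhile (fun a => decide (a ≠ xs.foldr min x))).tail = [] then
      k :: xs.foldr min x :: ((x :: xs).takeWhile (fun a => decide (a ≠ xs.foldr min x)))
    else
      fkt k ((x :: xs).takeWhile (fun a => decide (a ≠ xs.foldr min x))) ++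
        xs.foldr min x :: ((x :: xs).dropWhile (fun a => decide (a ≠ xs.foldr min x))).tail
termination_by w => w.length
decreasing_by
  · simp only [List.foldr_attach] at *
    have h1 := (List.dropWhile_sublist (l := x :: xs) (fun a => decide (a ≠ xs.foldr min x))).length_le
    have h2 := List.length_tail (l := (x :: xs).dropWhile (fun a => decide (a ≠ xs.foldr min x)))
    simp only [List.length_cons] at *
    omega
  · rename_i hk hα hβ
    simp only [List.foldr_attach] at *
    try simp only [List.foldr_attach] at *
    have h0 : ((x :: xs).takeWhile (fun a => decide (a ≠ xs.foldr min x))) ++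
        ((x :: xs).dropWhile (fun a => decide (a ≠ xs.foldr min x))) = x :: xs :=
      List.takeWhile_append_dropWhile ..
    have h1 : ((x :: xs).dropWhile (fun a => decide (a ≠ xs.foldr min x))) ≠ [] := by
      intro h
      apply hβ
      rw [h]
      rfl
    have h2 := congrArg List.length h0
    simp only [List.length_append, List.length_cons] at h2
    have h3 : 0 < ((x :: xs).dropWhile (fun a => decide (a ≠ xs.foldr min x))).length :=
      List.length_pos_iff.mpr h1
    simp only [List.length_cons]
    omega

/-- `ini w` is the first letter of `w`. -/
def ini (w : List ℕ) : ℕ := w.headD 0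

/-- The word of a permutation `π ∈ S_n`, namely `π(1) π(2) … π(n)`
(with values in `{1, …, n}`). -/
def permList {n : ℕ} (π : Equiv.Perm (Fin n)) : List ℕ :=
  List.ofFn fun i => (π i : ℕ) + 1

/-- The bijection `φ`: `φ(π) = f(π(1), f(π(2), ⋯ f(π(n), ∅) ⋯ ))`. -/
def phiW (w : List ℕ) : List ℕ := w.foldr fkt []

/-- Helper: `decRun l` splits `l` into its maximal weakly decreasing prefix
and the rest. -/
def decRun : List ℕ → List ℕ × List ℕ
  | [] => ([], [])
  | [x] => ([x], [])
  | x :: y :: rest =>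
    if y ≤ x then ((x :: (decRun (y :: rest)).1), (decRun (y :: rest)).2)
    else ([x], y :: rest)

theorem decRun_append : ∀ l : List ℕ, (decRun l).1 ++ (decRun l).2 = l
  | [] => rfl
  | [x] => rfl
  | x :: y :: rest => by
    rw [decRun]
    split
    · simpa using decRun_append (y :: rest)
    · rfl

/-- Helper computing the hook factorization of a word from its reversal: the
rightmost hook of the word starts at its rightmost descent top, i.e. it is
obtained by extending the maximal weakly decreasing prefix of the reversed word
by one more letter; the process is repeated on what remains, and when no
letters usable for a hook remain the word left over is the increasing part
`π₀`. The result is `(π₀, [π₁, …, π_k])`. -/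
def hookRev (r : List ℕ) : List ℕ × List (List ℕ) :=
  match h : (decRun r).2 with
  | [] => (r.reverse, [])
  | z :: rest =>
    ((hookRev rest).1, (hookRev rest).2 ++ [z :: (decRun r).1.reverse])
termination_by r.length
decreasing_by
  have h2 := congrArg List.length (decRun_append r)
  rw [h] at h2
  simp only [List.length_append, List.length_cons] at h2
  omega

/-- The hook factorization `(π₀, [π₁, …, π_k])` of a word
`w = π₀ π₁ ⋯ π_k`, where `π₀` is increasing and each `π_i`, `i ≥ 1`, is a
hook. -/
def hookSplit (w : List ℕ) : List ℕ × List (List ℕ) := hookRev w.reverse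

/-- `pix w` is the length of the initial increasing factor `π₀` in the hook
factorization of `w`. -/
def pix (w : List ℕ) : ℕ := (hookSplit w).1.length

/-- `lec w` is the sum of the numbers of inversions of the hooks in the hook
factorization of `w`. -/
def lec (w : List ℕ) : ℕ := ((hookSplit w).2.map inv).sum

/-- A word `w(1) … w(r)` with `r ≥ 2` is a hook if
`w(1) > w(2) ≤ w(3) ≤ ⋯ ≤ w(r)`. -/
def IsHook (w : List ℕ) : Prop :=
  ∃ a b rest, w = a :: b :: rest ∧ b < a ∧ List.Chain' (· ≤ ·) (b :: rest)

/-- `w(i)` is a left-to-right maximum of `w` if `w(k) < w(i)` for all `k < i`. -/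
def IsLRMax (w : List ℕ) (i : ℕ) : Prop := ∀ k < i, w.getD k 0 < w.getD i 0

instance (w : List ℕ) (i : ℕ) : Decidable (IsLRMax w i) := by
  unfold IsLRMax; infer_instance

/-- `mix w` counts the pairs of positions `i < j` such that either
`w(i) > w(j)` and `w(i)` is a left-to-right maximum, or `w(i) < w(j)` and
there is `k < i` with `w(k) > w(j)`. -/
def mix (w : List ℕ) : ℕ :=
  ((Finset.range w.length ×ˢ Finset.range w.length).filter fun p =>
    p.1 < p.2 ∧ ((w.getD p.2 0 < w.getD p.1 0 ∧ IsLRMax w p.1) ∨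
      (w.getD p.1 0 < w.getD p.2 0 ∧ ∃ k ∈ Finset.range p.1, w.getD p.2 0 < w.getD k 0))).card

/-- `das w` counts the positions `i` such that either `w(i) > w(i+1)` and
`w(i)` is a left-to-right maximum, or `w(i) < w(i+1)` and there is `k < i`
with `w(k) > w(i+1)`. -/
def das (w : List ℕ) : ℕ :=
  ((Finset.range (w.length - 1)).filter fun i =>
    (w.getD (i + 1) 0 < w.getD i 0 ∧ IsLRMax w i) ∨
      (w.getD i 0 < w.getD (i + 1) 0 ∧ ∃ k ∈ Finset.range i, w.getD (i + 1) 0 < w.getD k 0)).card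

/-- The values of the left-to-right maxima of a word, listed in increasing
order (which is also their order of occurrence). -/
def lrMaxima : List ℕ → List ℕ
  | [] => []
  | x :: xs => x :: lrMaxima (xs.filter fun a => decide (x < a))
termination_by l => l.length
decreasing_by
  have := xs.length_filter_le (fun a => decide (x < a))
  simp only [List.length_unattach] at *
  exact Nat.lt_succ_of_le ((List.length_filter_le _ _).trans (List.length_attach (l := xs)).le)

/-- `Bset w m` is the list of entries of `w` that are smaller than `m` and lie
to the right of (the first occurrence of) `m` in `w`. -/
def Bset (w : List ℕ) (m : ℕ) : List ℕ :=
  ((w.dropWhile fun a => decide (a ≠ m)).tail).filter fun a => decide (a < m)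

/-- Helper for `psiS`: replace the letters satisfying `P`, in order, by the
letters of the first list. -/
def replaceSub (P : ℕ → Bool) : List ℕ → List ℕ → List ℕ
  | _, [] => []
  | rs, x :: xs =>
    if P x then rs.headD x :: replaceSub P rs.tail xs else x :: replaceSub P rs xs

/-- `psiS S w` is `ψ_S(w)`: the result of reversing, in place, the subword of
`w` consisting of the entries belonging to `S`. -/
def psiS (S : List ℕ) (w : List ℕ) : List ℕ :=
  replaceSub (fun a => decide (a ∈ S)) ((w.filter fun a => decide (a ∈ S)).reverse) w

/-- Helper applying the alternating composition
`ψ_{B₁} ∘ ψ_{B₂ ∩ B₁} ∘ ψ_{B₂} ∘ ⋯ ∘ ψ_{B_{k-1}} ∘ ψ_{B_k ∩ B_{k-1}} ∘ ψ_{B_k}`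
to `w`, given the list `[B_k, B_{k-1}, …, B₁]`. -/
def psiChain : List (List ℕ) → List ℕ → List ℕ
  | [], w => w
  | [B], w => psiS B w
  | B :: B' :: rest, w => psiChain (B' :: rest) (psiS (B.inter B') (psiS B w))

/-- The Brändén–Claesson bijection `ψ`. -/
def psi (w : List ℕ) : List ℕ :=
  psiChain (((lrMaxima w).map (Bset w)).reverse) w

lemma foldr_min_mem (x : ℕ) (xs : List ℕ) : xs.foldr min x ∈ x :: xs := by
  induction xs generalizing x with
  | nil => simp
  | cons y ys ih =>
    simp only [List.foldr_cons]
    rcases min_cases y (ys.foldr min x) with ⟨h, _⟩ | ⟨h, _⟩ <;> rw [h]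
    · simp
    · rcases List.mem_cons.1 (ih x) with h' | h' <;> simp [h']

lemma foldr_min_le (x : ℕ) (xs : List ℕ) : ∀ a ∈ x :: xs, xs.foldr min x ≤ a := by
  induction xs generalizing x with
  | nil => simp
  | cons y ys ih =>
    intro a ha
    simp only [List.foldr_cons]
    simp only [List.mem_cons] at ha
    rcases ha with rfl | rfl | ha
    · exact le_trans (min_le_right _ _) (ih a a (by simp))
    · exact min_le_left _ _
    · exact le_trans (min_le_right _ _) (ih x a (by simp [ha]))

lemma foldr_min_eq {x c : ℕ} {xs : List ℕ} (h1 : c ∈ x :: xs)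
    (h2 : ∀ a ∈ x :: xs, c ≤ a) : xs.foldr min x = c :=
  le_antisymm (foldr_min_le x xs c h1) (h2 _ (foldr_min_mem x xs))

lemma dropWhile_ne_of_mem {m : ℕ} : ∀ {l : List ℕ}, m ∈ l →
    l.dropWhile (fun a => decide (a ≠ m)) = m :: (l.dropWhile (fun a => decide (a ≠ m))).tail := by
  intro l
  induction l with
  | nil => simp
  | cons x xs ih =>
    intro hm
    by_cases hx : x = m
    · subst hx; simp [List.dropWhile_cons]
    · rw [List.dropWhile_cons]
      have hp : decide (x ≠ m) = true := by simp [hx]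
      rw [hp]
      simp only [if_true]
      have : m ∈ xs := by
        rcases List.mem_cons.1 hm with h | h
        · exact absurd h.symm hx
        · exact h
      exact ih this

lemma takeWhile_append_all {p : ℕ → Bool} {l t : List ℕ} (h : ∀ a ∈ l, p a = true) :
    (l ++ t).takeWhile p = l ++ t.takeWhile p := by
  induction l with
  | nil => simp
  | cons x xs ih =>
    simp only [List.cons_append, List.takeWhile_cons, h x (by simp), if_true]
    rw [ih (fun a ha => h a (by simp [ha]))]

lemma dropWhile_append_all {p : ℕ → Bool} {l t : List ℕ} (h : ∀ a ∈ l, p a = true) :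
    (l ++ t).dropWhile p = t.dropWhile p := by
  induction l with
  | nil => simp
  | cons x xs ih =>
    simp only [List.cons_append, List.dropWhile_cons, h x (by simp), if_true]
    exact ih (fun a ha => h a (by simp [ha]))


-- decomposition lemma
lemma list_decomp (x : ℕ) (xs : List ℕ) :
    x :: xs = (x :: xs).takeWhile (fun a => decide (a ≠ xs.foldr min x)) ++
      xs.foldr min x :: ((x :: xs).dropWhile (fun a => decide (a ≠ xs.foldr min x))).tail := by
  nth_rewrite 1 [← List.takeWhile_append_dropWhile (p := fun a => decide (a ≠ xs.foldr min x)) (l := x :: xs)]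
  rw [dropWhile_ne_of_mem (foldr_min_mem x xs)]
  rfl

lemma fkt_perm_aux : ∀ (N : ℕ) (l : List ℕ), l.length ≤ N → ∀ k, (fkt k l).Perm (k :: l) := by
  intro N
  induction N with
  | zero =>
    intro l hl k
    rw [List.length_eq_zero_iff.1 (Nat.le_zero.1 hl), fkt]
  | succ N ih =>
    intro l hl k
    match l with
    | [] => rw [fkt]
    | x :: xs =>
      rw [fkt]
      have hxs : xs.length ≤ N := by simp only [List.length_cons] at hl; omega
      set m := xs.foldr min x with hmdef
      have hdec := list_decomp x xs
      rw [← hmdef] at hdec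
      set α := (x :: xs).takeWhile (fun a => decide (a ≠ m)) with hα
      set β := ((x :: xs).dropWhile (fun a => decide (a ≠ m))).tail with hβ
      have hlα : α.length ≤ N := by
        have := congrArg List.length hdec
        simp only [List.length_cons, List.length_append] at this
        omega
      split
      · exact List.Perm.refl _
      split
      · next hk htake =>
        have hx : x = m := by
          by_contra hne
          rw [hα, List.takeWhile_cons] at htake
          simp [hne] at htake
        have hdrop : (x :: xs).dropWhile (fun a => decide (a ≠ m)) = x :: xs := by
          rw [List.dropWhile_cons]; simp [hx]
        have hβxs : β = xs := by rw [hβ, hdrop, List.tail_cons]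
        rw [hβxs]
        have p1 : (fkt k xs ++ [m]).Perm ((k :: xs) ++ [m]) := (ih xs hxs k).append_right _
        have p2 : ((k :: xs) ++ [m]).Perm (k :: m :: xs) := by
          rw [List.cons_append]
          exact (List.perm_append_singleton m xs).cons k
        have : (fkt k xs ++ [m]).Perm (k :: m :: xs) := p1.trans p2
        rw [hx]
        exact this
      split
      · next hk h1 h2 =>
        rw [h2] at hdec
        have : (k :: m :: α).Perm (k :: (α ++ [m])) :=
          ((List.perm_append_singleton m α).symm).cons k
        rw [hdec]
        simpa using this
      · next hk h1 h2 =>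
        have p1 : (fkt k α ++ m :: β).Perm ((k :: α) ++ m :: β) := (ih α hlα k).append_right _
        have : ((k :: α) ++ m :: β) = k :: (α ++ m :: β) := by rw [List.cons_append]
        rw [hdec]
        exact p1.trans (by rw [this])

lemma fkt_perm (k : ℕ) (l : List ℕ) : (fkt k l).Perm (k :: l) :=
  fkt_perm_aux l.length l le_rfl k

lemma phiW_perm (w : List ℕ) : (phiW w).Perm w := by
  induction w with
  | nil => simp [phiW]
  | cons a w ih =>
    have : phiW (a :: w) = fkt a (phiW w) := rfl
    rw [this]
    exact (fkt_perm a (phiW w)).trans (ih.cons a)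

def gkt : List ℕ → ℕ × List ℕ
  | [] => (0, [])
  | x :: xs =>
    if x = xs.foldr min x then (x, xs)
    else if xs.headD 0 = xs.foldr min x then (x, xs.tail ++ [xs.foldr min x])
    else if (x :: xs).getLast? = some (xs.foldr min x) then
      ((gkt (x :: xs).dropLast).1, xs.foldr min x :: (gkt (x :: xs).dropLast).2)
    else
      ((gkt ((x :: xs).takeWhile (fun a => decide (a ≠ xs.foldr min x)))).1,
       (gkt ((x :: xs).takeWhile (fun a => decide (a ≠ xs.foldr min x)))).2 ++
         xs.foldr min x :: ((x :: xs).dropWhile (fun a => decide (a ≠ xs.foldr min x))).tail)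
termination_by l => l.length
decreasing_by
  · simp [List.length_dropLast]
  · rename_i h1 h2 h3
    have hmem := foldr_min_mem x xs
    have hsub := (List.takeWhile_sublist (l := x :: xs) (fun a => decide (a ≠ xs.foldr min x))).length_le
    rcases Nat.lt_or_ge ((List.takeWhile (fun a => decide (a ≠ xs.foldr min x)) (x :: xs)).length) (x :: xs).length with h | h
    · simpa using h
    · exfalso
      have heq : (x :: xs).takeWhile (fun a => decide (a ≠ xs.foldr min x)) = x :: xs :=
        (List.takeWhile_sublist _).eq_of_length (le_antisymm hsub h)
      have := List.mem_takeWhile_imp (heq ▸ hmem)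
      simp at this

lemma gkt_case1 {x : ℕ} {xs : List ℕ} (hall : ∀ a ∈ xs, x ≤ a) :
    gkt (x :: xs) = (x, xs) := by
  have hm : xs.foldr min x = x := foldr_min_eq (by simp) (by
    intro a ha
    rcases List.mem_cons.1 ha with rfl | ha
    · exact le_rfl
    · exact hall a ha)
  rw [gkt, hm]
  simp

lemma gkt_case2 {k m : ℕ} {rest : List ℕ} (hmk : m < k) (hall : ∀ a ∈ rest, m ≤ a) :
    gkt (k :: m :: rest) = (k, rest ++ [m]) := by
  have hm : (m :: rest).foldr min k = m := foldr_min_eq (by simp) (by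
    intro a ha
    rcases List.mem_cons.1 ha with rfl | ha
    · exact le_of_lt hmk
    · rcases List.mem_cons.1 ha with rfl | ha
      · exact le_rfl
      · exact hall a ha)
  rw [gkt, hm]
  simp [Nat.ne_of_gt hmk]

lemma gkt_case3 {m x y : ℕ} {t : List ℕ} (hall : ∀ a ∈ x :: y :: t, m < a) :
    gkt ((x :: y :: t) ++ [m]) = ((gkt (x :: y :: t)).1, m :: (gkt (x :: y :: t)).2) := by
  have hm : ((y :: t) ++ [m]).foldr min x = m := foldr_min_eq
    (by simp) (by
      intro a ha
      simp only [List.cons_append, List.mem_cons, List.mem_append, List.mem_singleton] at ha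
      rcases ha with rfl | rfl | ha | rfl | h
      · exact le_of_lt (hall a (by simp))
      · exact le_of_lt (hall a (by simp))
      · exact le_of_lt (hall a (by simp [ha]))
      · exact le_rfl
      · simp at h)
  rw [List.cons_append, List.cons_append, gkt]
  rw [show (y :: (t ++ [m])) = ((y :: t) ++ [m]) by simp] at *
  rw [hm]
  have hx : ¬ x = m := Nat.ne_of_gt (hall x (by simp))
  have hy : ¬ ((y :: t) ++ [m]).headD 0 = m := by
    simp only [List.cons_append, List.headD_cons]
    exact Nat.ne_of_gt (hall y (by simp))
  have hlast : (x :: ((y :: t) ++ [m])).getLast? = some m := by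
    rw [show (x :: ((y :: t) ++ [m])) = ((x :: y :: t) ++ [m]) by simp]
    exact List.getLast?_concat
  have hdl : (x :: ((y :: t) ++ [m])).dropLast = x :: y :: t := by
    rw [show (x :: ((y :: t) ++ [m])) = ((x :: y :: t) ++ [m]) by simp]
    exact List.dropLast_concat
  simp only [hx, hy, hlast, hdl, if_false, if_true, ite_true, ite_false, if_neg, reduceIte]

lemma gkt_case4 {m x y : ℕ} {t δ : List ℕ} (hσ : ∀ a ∈ x :: y :: t, m < a)
    (hδne : δ ≠ []) (hδ : ∀ a ∈ δ, m < a) :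
    gkt ((x :: y :: t) ++ m :: δ) =
      ((gkt (x :: y :: t)).1, (gkt (x :: y :: t)).2 ++ m :: δ) := by
  have hm : ((y :: t) ++ m :: δ).foldr min x = m := foldr_min_eq
    (by simp) (by
      intro a ha
      simp only [List.cons_append, List.mem_cons, List.mem_append] at ha
      rcases ha with rfl | rfl | ha | ha
      · exact le_of_lt (hσ a (by simp))
      · exact le_of_lt (hσ a (by simp))
      · exact le_of_lt (hσ a (by simp [ha]))
      · rcases ha with rfl | ha
        · exact le_rfl
        · exact le_of_lt (hδ a ha))
  rw [List.cons_append, List.cons_append, gkt]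
  rw [show (y :: (t ++ m :: δ)) = ((y :: t) ++ m :: δ) by simp] at *
  rw [hm]
  have hx : ¬ x = m := Nat.ne_of_gt (hσ x (by simp))
  have hy : ¬ ((y :: t) ++ m :: δ).headD 0 = m := by
    simp only [List.cons_append, List.headD_cons]
    exact Nat.ne_of_gt (hσ y (by simp))
  have hlast : ¬ (x :: ((y :: t) ++ m :: δ)).getLast? = some m := by
    rw [show (x :: ((y :: t) ++ m :: δ)) = ((x :: y :: t) ++ m :: δ) by simp,
      List.getLast?_append]
    have : (m :: δ).getLast? = δ.getLast? := by
      cases δ with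
      | nil => exact absurd rfl hδne
      | cons d ds => rw [List.getLast?_cons_cons]
    rw [this, List.getLast?_eq_getLast hδne]
    simp only [Option.some_or]
    intro h
    have := hδ (δ.getLast hδne) (List.getLast_mem hδne)
    simp only [Option.some.injEq] at h
    omega
  have hall' : ∀ a ∈ x :: y :: t, (fun a => decide (a ≠ m)) a = true := by
    intro a ha
    simp only [decide_eq_true_eq, ne_eq]
    exact Nat.ne_of_gt (hσ a ha)
  have htake : (x :: ((y :: t) ++ m :: δ)).takeWhile (fun a => decide (a ≠ m)) = x :: y :: t := by
    rw [show (x :: ((y :: t) ++ m :: δ)) = ((x :: y :: t) ++ m :: δ) by simp,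
      takeWhile_append_all hall', List.takeWhile_cons]
    simp
  have hdrop : ((x :: ((y :: t) ++ m :: δ)).dropWhile (fun a => decide (a ≠ m))).tail = δ := by
    rw [show (x :: ((y :: t) ++ m :: δ)) = ((x :: y :: t) ++ m :: δ) by simp,
      dropWhile_append_all hall', List.dropWhile_cons]
    simp
  simp only [hx, hy, hlast, htake, hdrop, if_false, ite_false, reduceIte]

lemma exists_cons_cons {l : List ℕ} (h : 2 ≤ l.length) : ∃ a b t, l = a :: b :: t := by
  match l with
  | [] => simp at h
  | [a] => simp at h
  | a :: b :: t => exact ⟨a, b, t, rfl⟩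

lemma gkt_fkt_aux : ∀ (N : ℕ) (l : List ℕ), l.length ≤ N → ∀ k, k ∉ l → l.Nodup →
    gkt (fkt k l) = (k, l) := by
  intro N
  induction N with
  | zero =>
    intro l hl k _ _
    rw [List.length_eq_zero_iff.1 (Nat.le_zero.1 hl), fkt]
    exact gkt_case1 (by simp)
  | succ N ih =>
    intro l hl k hkl hnd
    match l with
    | [] =>
      rw [fkt]
      exact gkt_case1 (by simp)
    | x :: xs =>
      rw [fkt]
      have hxs : xs.length ≤ N := by simp only [List.length_cons] at hl; omega
      set m := xs.foldr min x with hmdef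
      have hmem : m ∈ x :: xs := foldr_min_mem x xs
      have hmle : ∀ a ∈ x :: xs, m ≤ a := foldr_min_le x xs
      have hdec := list_decomp x xs
      rw [← hmdef] at hdec
      set α := (x :: xs).takeWhile (fun a => decide (a ≠ m)) with hα
      set β := ((x :: xs).dropWhile (fun a => decide (a ≠ m))).tail with hβ
      have hkm : k ≠ m := fun h => hkl (h ▸ hmem)
      have hlα : α.length ≤ N := by
        have := congrArg List.length hdec
        simp only [List.length_cons, List.length_append] at this
        omega
      have hαmem : ∀ a ∈ α, a ∈ x :: xs ∧ a ≠ m := by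
        intro a ha
        refine ⟨(List.takeWhile_sublist _).mem ha, ?_⟩
        have := List.mem_takeWhile_imp (hα ▸ ha)
        simpa using this
      have hndαβ : (α ++ m :: β).Nodup := hdec ▸ hnd
      have hβmem : ∀ a ∈ β, a ∈ x :: xs ∧ a ≠ m := by
        intro a ha
        constructor
        · rw [hdec]
          simp [ha]
        · intro h
          subst h
          exact (List.nodup_cons.1 (List.nodup_append.1 hndαβ).2.1).1 ha
      split
      · next hk =>
        exact gkt_case1 (fun a ha => le_of_lt (lt_of_lt_of_le hk (hmle a ha)))
      · next hk =>
        have hmk : m < k := lt_of_le_of_ne (not_lt.1 hk) (Ne.symm hkm)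
        split
        · next htake =>
          have hx : x = m := by
            by_contra hne
            rw [hα, List.takeWhile_cons] at htake
            simp [hne] at htake
          have hdrop : (x :: xs).dropWhile (fun a => decide (a ≠ m)) = x :: xs := by
            rw [List.dropWhile_cons]; simp [hx]
          have hβxs : β = xs := by rw [hβ, hdrop, List.tail_cons]
          rw [hβxs]
          have hkxs : k ∉ xs := fun h => hkl (by simp [h])
          have hndxs : xs.Nodup := (List.nodup_cons.1 hnd).2
          have hmxs : m ∉ xs := hx ▸ (List.nodup_cons.1 hnd).1
          have hih := ih xs hxs k hkxs hndxs
          match hxse : xs with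
          | [] =>
            rw [fkt]
            rw [show ([k] ++ [m]) = k :: m :: [] by simp]
            rw [gkt_case2 hmk (by simp)]
            simp [hx]
          | y :: t =>
            have hlen2 : 2 ≤ (fkt k (y :: t)).length := by
              rw [(fkt_perm k (y :: t)).length_eq]
              simp
            obtain ⟨a, b, u, habu⟩ := exists_cons_cons hlen2
            have hall : ∀ c ∈ a :: b :: u, m < c := by
              intro c hc
              rw [← habu] at hc
              have := (fkt_perm k (y :: t)).mem_iff.1 hc
              rcases List.mem_cons.1 this with rfl | hcyt
              · exact hmk
              · refine lt_of_le_of_ne (hmle c (by simp [hcyt])) ?_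
                intro h
                exact hmxs (h ▸ hcyt)
            rw [habu, gkt_case3 hall, ← habu, hih]
            simp [hx]
        · next htake =>
          split
          · next hbeta =>
            rw [hbeta] at hdec
            rw [gkt_case2 hmk (fun a ha => hmle a (hαmem a ha).1)]
            rw [hdec]
          · next hbeta =>
            have hkα : k ∉ α := fun h => hkl (hαmem k h).1
            have hndα : α.Nodup := (List.nodup_append.1 hndαβ).1
            have hih := ih α hlα k hkα hndα
            have hαne : α ≠ [] := htake
            have hlen2 : 2 ≤ (fkt k α).length := by
              rw [(fkt_perm k α).length_eq, List.length_cons]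
              have := List.length_pos_iff.2 hαne
              omega
            obtain ⟨a, b, u, habu⟩ := exists_cons_cons hlen2
            have hall : ∀ c ∈ a :: b :: u, m < c := by
              intro c hc
              rw [← habu] at hc
              have := (fkt_perm k α).mem_iff.1 hc
              rcases List.mem_cons.1 this with rfl | hcα
              · exact hmk
              · exact lt_of_le_of_ne (hmle c (hαmem c hcα).1) (Ne.symm (hαmem c hcα).2)
            have hβall : ∀ c ∈ β, m < c := fun c hc =>
              lt_of_le_of_ne (hmle c (hβmem c hc).1) (Ne.symm (hβmem c hc).2)
            rw [habu, gkt_case4 hall hbeta hβall, ← habu, hih]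
            rw [hdec]

lemma gkt_fkt (k : ℕ) (l : List ℕ) (hk : k ∉ l) (hnd : l.Nodup) :
    gkt (fkt k l) = (k, l) :=
  gkt_fkt_aux l.length l le_rfl k hk hnd

lemma phiW_inj : ∀ (w1 w2 : List ℕ), w1.Nodup → w2.Nodup → phiW w1 = phiW w2 → w1 = w2 := by
  intro w1
  induction w1 with
  | nil =>
    intro w2 _ _ h
    have : (phiW w2).length = 0 := by rw [← h]; rfl
    rw [(phiW_perm w2).length_eq] at this
    exact (List.length_eq_zero_iff.1 this).symm
  | cons a t ihw =>
    intro w2 hnd1 hnd2 h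
    match w2 with
    | [] =>
      exfalso
      have : (phiW (a :: t)).length = 0 := by rw [h]; rfl
      rw [(phiW_perm (a :: t)).length_eq] at this
      simp at this
    | b :: t2 =>
      have h1 : phiW (a :: t) = fkt a (phiW t) := rfl
      have h2 : phiW (b :: t2) = fkt b (phiW t2) := rfl
      rw [h1, h2] at h
      have hat : a ∉ phiW t := fun hc =>
        (List.nodup_cons.1 hnd1).1 ((phiW_perm t).mem_iff.1 hc)
      have hbt : b ∉ phiW t2 := fun hc =>
        (List.nodup_cons.1 hnd2).1 ((phiW_perm t2).mem_iff.1 hc)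
      have hndt : (phiW t).Nodup := ((phiW_perm t).nodup_iff).2 (List.nodup_cons.1 hnd1).2
      have hndt2 : (phiW t2).Nodup := ((phiW_perm t2).nodup_iff).2 (List.nodup_cons.1 hnd2).2
      have e1 := gkt_fkt a (phiW t) hat hndt
      have e2 := gkt_fkt b (phiW t2) hbt hndt2
      rw [h] at e1
      rw [e2] at e1
      have hab : b = a := congrArg Prod.fst e1
      have ht : phiW t2 = phiW t := congrArg Prod.snd e1
      rw [hab, ihw t2 (List.nodup_cons.1 hnd1).2 (List.nodup_cons.1 hnd2).2 ht.symm]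


/-- The map `φ : S_n → S_n` is a bijection (identifying
permutations of `[n] = {1, …, n}` with words that are rearrangements of
`1 2 ⋯ n`). -/
theorem phi_bijective (n : ℕ) :
    Set.BijOn phiW {w : List ℕ | w.Perm (List.range' 1 n)}
      {w : List ℕ | w.Perm (List.range' 1 n)} := by
  have hfin : ({w : List ℕ | w.Perm (List.range' 1 n)}).Finite := by
    apply Set.Finite.ofFinset ((List.range' 1 n).permutations.toFinset)
    intro w
    simp [List.mem_permutations, Set.mem_setOf_eq]
  have hmaps : Set.MapsTo phiW {w : List ℕ | w.Perm (List.range' 1 n)}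
      {w : List ℕ | w.Perm (List.range' 1 n)} := by
    intro w hw
    exact (phiW_perm w).trans hw
  have hnodup : (List.range' 1 n).Nodup := List.nodup_range'
  have hinj : Set.InjOn phiW {w : List ℕ | w.Perm (List.range' 1 n)} := by
    intro w1 h1 w2 h2 h
    exact phiW_inj w1 w2 (h1.nodup_iff.2 hnodup) (h2.nodup_iff.2 hnodup) h
  exact (hfin.injOn_iff_bijOn_of_mapsTo hmaps).1 hinj

end PaperStats
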